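/- For every integer N ≥ 1: 0 < H(η(N); −1) and H(η(N); −1) ≤ log(N+1)/log 2 (in particular 0 < H(η(N); −1)/log(N+1) ≤ 1/log 2). Moreover, for every real s < −1 and every integer N ≥ 1, |H(η(N); s)| ≤ ((2^{s+1} + 3)/(1 − 2^{s+1})) · N^{−(s+1)}. -/

import Mathlib

open Filter Topology

noncomputable section

namespace GreedyEnergy

/-- Decreasing list `n₁ > n₂ > ⋯ > n_p` of the binary exponents of `N`,
so that `N = 2^{n₁} + ⋯ + 2^{n_p}` with `n₁ > n₂ > ⋯ > n_p ≥ 0`. -/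
def binExps (N : ℕ) : List ℕ :=
  ((List.range (N + 1)).filter fun i => N.testBit i).reverse

/-- The number `p = τ_b(N)` of ones in the binary expansion of `N`. -/
def pbin (N : ℕ) : ℕ := (binExps N).length

/-- `η(N)` viewed as an infinite sequence (0-indexed): the entry of index `k`
is `θ_{k+1} = 2^{n_{k+1}}/N` for `k < p`, and `0` for `k ≥ p`. -/
def eta (N : ℕ) : ℕ → ℝ :=
  fun k => ((binExps N).map fun n => (2 : ℝ) ^ n / (N : ℝ)).getD k 0

/-- `H(θ; s)` for a finite vector of length `p` given (0-indexed) by `θ : ℕ → ℝ`: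
`H(θ;s) = Σ_{k=1}^p θ_k^{s+1} + 2(2^s − 1) Σ_{k=1}^{p−1} θ_k^s Σ_{j=k+1}^p θ_j`. -/
def Hvec (θ : ℕ → ℝ) (p : ℕ) (s : ℝ) : ℝ :=
  (∑ k ∈ Finset.range p, θ k ^ (s + 1)) +
    2 * ((2 : ℝ) ^ s - 1) *
      ∑ k ∈ Finset.range p, θ k ^ s * ∑ j ∈ Finset.Ico (k + 1) p, θ j

/-- `K(θ) = 2 log 2 + Σ_{k=1}^p θ_k² log(θ_k/4) + 2 Σ_{k=1}^{p−1} (Σ_{j=k+1}^p θ_j) θ_k log θ_k`. -/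
def Kvec (θ : ℕ → ℝ) (p : ℕ) : ℝ :=
  2 * Real.log 2 + (∑ k ∈ Finset.range p, θ k ^ 2 * Real.log (θ k / 4)) +
    2 * ∑ k ∈ Finset.range p, (∑ j ∈ Finset.Ico (k + 1) p, θ j) * (θ k * Real.log (θ k))

/-- `R(θ) = −(2 log 2) Σ_{k=1}^p (k−1) θ_k − Σ_{k=1}^p θ_k log θ_k` (0-indexed: `k−1 ↦ k`). -/
def Rvec (θ : ℕ → ℝ) (p : ℕ) : ℝ :=
  -(2 * Real.log 2) * (∑ k ∈ Finset.range p, (k : ℝ) * θ k) -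
    ∑ k ∈ Finset.range p, θ k * Real.log (θ k)

/-- `G(θ; s) = Σ_{k=1}^p θ_k^s`. -/
def Gvec (θ : ℕ → ℝ) (p : ℕ) (s : ℝ) : ℝ := ∑ k ∈ Finset.range p, θ k ^ s

/-- `Λ(θ) = Σ_{k=1}^p θ_k log θ_k`. -/
def Λvec (θ : ℕ → ℝ) (p : ℕ) : ℝ := ∑ k ∈ Finset.range p, θ k * Real.log (θ k)

/-- `H(η(N); s)`. -/
def Heta (N : ℕ) (s : ℝ) : ℝ := Hvec (eta N) (pbin N) s

/-- `K(η(N))`. -/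
def Keta (N : ℕ) : ℝ := Kvec (eta N) (pbin N)

/-- `R(η(N))`. -/
def Reta (N : ℕ) : ℝ := Rvec (eta N) (pbin N)

/-- `G(η(N); s)`. -/
def Geta (N : ℕ) (s : ℝ) : ℝ := Gvec (eta N) (pbin N) s

/-- `Λ(η(N))`. -/
def Λeta (N : ℕ) : ℝ := Λvec (eta N) (pbin N)

/-- The set `𝒮` of infinite sequences `ϑ` for which there is a strictly increasing
sequence of positive integers `N_m` with `ϑ_j = lim_m (η(N_m))_j` for every `j`. -/
def Sset : Set (ℕ → ℝ) :=
  {ϑ | ∃ Nm : ℕ → ℕ, StrictMono Nm ∧ (∀ m, 1 ≤ Nm m) ∧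
        ∀ j, Tendsto (fun m => eta (Nm m) j) atTop (𝓝 (ϑ j))}

/-- `H(ϑ; s)` for an infinite sequence `ϑ` (0-indexed). The conventions
`ϑ_n log ϑ_n = 0` and `ϑ_n^s ϑ_j = 0` when `ϑ_n = 0` hold automatically,
since `Real.log 0 = 0` and `(0:ℝ) ^ s = 0` for `s ≠ 0` (and the factor
`2^s − 1` vanishes when `s = 0`). -/
def Hinf (ϑ : ℕ → ℝ) (s : ℝ) : ℝ :=
  (∑' n : ℕ, ϑ n ^ (s + 1)) +
    2 * ((2 : ℝ) ^ s - 1) * ∑' n : ℕ, ϑ n ^ s * ∑' j : ℕ, ϑ (n + 1 + j)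

/-- `K(ϑ)` for an infinite sequence `ϑ`. -/
def Kinf (ϑ : ℕ → ℝ) : ℝ :=
  2 * Real.log 2 + (∑' n : ℕ, ϑ n ^ 2 * Real.log (ϑ n / 4)) +
    2 * ∑' n : ℕ, (∑' j : ℕ, ϑ (n + 1 + j)) * (ϑ n * Real.log (ϑ n))

/-- `R(ϑ)` for an infinite sequence `ϑ` (0-indexed: `n−1 ↦ n`). -/
def Rinf (ϑ : ℕ → ℝ) : ℝ :=
  -(2 * Real.log 2) * (∑' n : ℕ, (n : ℝ) * ϑ n) - ∑' n : ℕ, ϑ n * Real.log (ϑ n)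

/-- The set of limit points of a real sequence: values of convergent subsequences. -/
def limitPoints (x : ℕ → ℝ) : Set ℝ :=
  {L | ∃ φ : ℕ → ℕ, StrictMono φ ∧ Tendsto (fun m => x (φ m)) atTop (𝓝 L)}

/-- The Riesz `s`-kernel: `k_s(z,w) = |z−w|^{−s}` for `s ≠ 0`, `k_0(z,w) = −log|z−w|`. -/
def kernel (s : ℝ) (z w : ℂ) : ℝ :=
  if s = 0 then -Real.log (‖z - w‖) else ‖z - w‖ ^ (-s)

/-- The Riesz `s`-energy `E_s(a_0, …, a_{N−1}) = Σ_{i ≠ j} k_s(a_i, a_j)`. -/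
def energy (s : ℝ) (a : ℕ → ℂ) (N : ℕ) : ℝ :=
  ∑ i ∈ Finset.range N, ∑ j ∈ Finset.range N,
    if i ≠ j then kernel s (a i) (a j) else 0

/-- The potential `U_{N,s}(z) = Σ_{ℓ=0}^{N−1} k_s(z, a_ℓ)`. -/
def pot (s : ℝ) (a : ℕ → ℂ) (N : ℕ) (z : ℂ) : ℝ :=
  ∑ l ∈ Finset.range N, kernel s z (a l)

/-- A greedy `s`-energy sequence on the unit circle: all points lie on `S¹`, and for
every `N ≥ 1` the point `a_N` minimizes (if `s ≥ 0`) resp. maximizes (if `s < 0`)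
the potential `U_{N,s}` over `S¹`. -/
def IsGreedy (s : ℝ) (a : ℕ → ℂ) : Prop :=
  (∀ n, ‖a n‖ = 1) ∧
    ∀ N, 1 ≤ N →
      ((0 ≤ s → ∀ z : ℂ, ‖z‖ = 1 → pot s a N (a N) ≤ pot s a N z) ∧
        (s < 0 → ∀ z : ℂ, ‖z‖ = 1 → pot s a N z ≤ pot s a N (a N)))

/-- `I_s(σ) = 2^{−s} Γ((1−s)/2) / (√π Γ(1 − s/2))`. -/
def Isigma (s : ℝ) : ℝ :=
  (2 : ℝ) ^ (-s) / Real.sqrt Real.pi * (Real.Gamma ((1 - s) / 2) / Real.Gamma (1 - s / 2))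

/-- The value `ζ(s)` of the Riemann zeta function at a real `s` (real part of the
analytically continued zeta function). -/
def zetaR (s : ℝ) : ℝ := (riemannZeta (s : ℂ)).re


/- ### auxiliary lemmas -/

lemma binExps_sorted (N : ℕ) : (binExps N).Pairwise (· > ·) := by
  unfold binExps
  rw [List.pairwise_reverse]
  exact List.Pairwise.filter _ (List.pairwise_lt_range (n := N+1))

lemma mem_binExps {N i : ℕ} : i ∈ binExps N ↔ i < N + 1 ∧ N.testBit i := by
  simp [binExps, List.mem_filter, List.mem_range]

lemma sum_bits (m : ℕ) : ∀ N < 2^m, (∑ i ∈ Finset.range m, if N.testBit i then 2^i else 0) = N := by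
  induction m with
  | zero => intro N hN; interval_cases N; simp
  | succ m ih =>
    intro N hN
    rw [Finset.sum_range_succ']
    have h2 : N / 2 < 2 ^ m := Nat.div_lt_of_lt_mul (by rw [Nat.mul_comm]; simpa [pow_succ] using hN)
    have := ih (N/2) h2
    have hrec : ∀ i, N.testBit (i+1) = (N/2).testBit i := fun i => Nat.testBit_succ ..
    calc (∑ i ∈ Finset.range m, if N.testBit (i+1) then 2^(i+1) else 0) + (if N.testBit 0 then 2^0 else 0)
        = 2 * (∑ i ∈ Finset.range m, if (N/2).testBit i then 2^i else 0) + (N % 2) := by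
          rw [Finset.mul_sum]
          congr 1
          · exact Finset.sum_congr rfl fun i _ => by rw [hrec i]; split <;> ring
          · rw [Nat.testBit_zero]; rcases Nat.mod_two_eq_zero_or_one N with h | h <;> simp [h]
      _ = N := by rw [this]; omega

lemma filter_map_sum {α M : Type*} [AddCommMonoid M] (p : α → Bool) (f : α → M) :
    ∀ l : List α, ((l.filter p).map f).sum = (l.map fun i => if p i then f i else 0).sum := by
  intro l; induction l with
  | nil => simp
  | cons a t ih => by_cases h : p a <;> simp [List.filter_cons, h, ih]

lemma binExps_sum (N : ℕ) : ((binExps N).map (2 ^ ·)).sum = N := by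
  have h1 : ((binExps N).map (2 ^ ·)).sum
      = (((List.range (N+1)).filter fun i => N.testBit i).map (2 ^ ·)).sum := by
    rw [binExps, List.map_reverse, List.sum_reverse]
  rw [h1, filter_map_sum]
  have h2 : ((List.range (N+1)).map fun i => if N.testBit i then 2^i else 0).sum
      = ∑ i ∈ Finset.range (N+1), if N.testBit i then 2^i else 0 := rfl
  rw [h2, sum_bits (N+1) N (lt_of_lt_of_le (Nat.lt_succ_self N) (Nat.le_of_lt Nat.lt_two_pow_self))]

lemma sum_range_getD {M : Type*} [AddCommMonoid M] (l : List M) (d : M) :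
    ∑ k ∈ Finset.range l.length, l.getD k d = l.sum := by
  induction l with
  | nil => simp
  | cons a t ih =>
    rw [List.length_cons, Finset.sum_range_succ']
    simp only [List.getD_cons_succ, List.getD_cons_zero, ih, List.sum_cons]
    rw [add_comm]

lemma sorted_length_le : ∀ l : List ℕ, l.Pairwise (· > ·) → ∀ k < l.length, l.length ≤ l.getD k 0 + k + 1 := by
  intro l; induction l with
  | nil => intro _ k hk; simp at hk
  | cons a t ih =>
    intro hs k _
    have hst : t.Pairwise (· > ·) := hs.of_cons
    have hmem : ∀ x ∈ t, a > x := (List.pairwise_cons.1 hs).1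
    match k with
    | 0 =>
      simp only [List.getD_cons_zero, List.length_cons]
      match t with
      | [] => simp
      | b :: u =>
        have h1 := ih hst 0 (by simp)
        have h2 : b < a := hmem b (by simp)
        simp only [List.getD_cons_zero] at h1
        omega
    | k + 1 =>
      rcases Nat.lt_or_ge k t.length with h | h
      · have := ih hst k h
        simp only [List.getD_cons_succ, List.length_cons]
        omega
      · simp only [List.getD_cons_succ, List.length_cons]
        omega

lemma getD_map (l : List ℕ) (f : ℕ → ℝ) (k : ℕ) (h : k < l.length) :
    (l.map f).getD k 0 = f (l.getD k 0) := by
  rw [List.getD_eq_getElem _ _ (by simpa using h), List.getD_eq_getElem _ _ h, List.getElem_map]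

lemma eta_eq {N k : ℕ} (h : k < pbin N) : eta N k = 2 ^ ((binExps N).getD k 0) / N :=
  getD_map _ _ _ h

lemma eta_nonneg (N k : ℕ) : 0 ≤ eta N k := by
  rcases Nat.lt_or_ge k (pbin N) with h | h
  · rw [eta_eq h]; positivity
  · rw [eta, List.getD_eq_default]
    simpa [pbin] using h

lemma two_pow_getD_le {N k : ℕ} (h : k < pbin N) : 2 ^ ((binExps N).getD k 0) ≤ N := by
  have hmem : (binExps N).getD k 0 ∈ binExps N := by
    rw [List.getD_eq_getElem _ _ h]; exact List.getElem_mem _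
  have := (mem_binExps.1 hmem).2
  by_contra hc
  rw [Nat.testBit_eq_false_of_lt (by omega)] at this
  exact Bool.noConfusion this

lemma sum_range_two_pow (m : ℕ) : ∑ i ∈ Finset.range m, 2^i = 2^m - 1 := by
  induction m with
  | zero => simp
  | succ m ih =>
    rw [Finset.sum_range_succ, ih]
    have : 1 ≤ 2^m := Nat.one_le_two_pow
    ring_nf; omega

lemma getD_anti {N : ℕ} {i j : ℕ} (hj : j < pbin N) (hij : i < j) :
    (binExps N).getD j 0 < (binExps N).getD i 0 := by
  have hi : i < pbin N := lt_trans hij hj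
  rw [List.getD_eq_getElem _ _ hi, List.getD_eq_getElem _ _ hj]
  exact List.pairwise_iff_getElem.1 (binExps_sorted N) i j hi hj hij

lemma Ico_sum_le {N k : ℕ} (h : k < pbin N) :
    ∑ j ∈ Finset.Ico (k+1) (pbin N), 2 ^ ((binExps N).getD j 0)
      ≤ 2 ^ ((binExps N).getD k 0) - 1 := by
  set n : ℕ → ℕ := fun j => (binExps N).getD j 0 with hn
  have hinj : ∀ x ∈ Finset.Ico (k+1) (pbin N), ∀ y ∈ Finset.Ico (k+1) (pbin N), n x = n y → x = y := by
    intro x hx y hy hxy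
    simp only [Finset.mem_Ico] at hx hy
    rcases lt_trichotomy x y with h' | h' | h'
    · exact absurd hxy (ne_of_gt (getD_anti hy.2 h'))
    · exact h'
    · exact absurd hxy.symm (ne_of_gt (getD_anti hx.2 h'))
  have hsub : (Finset.Ico (k+1) (pbin N)).image n ⊆ Finset.range (n k) := by
    intro i hi
    simp only [Finset.mem_image, Finset.mem_Ico] at hi
    obtain ⟨j, ⟨hj1, hj2⟩, rfl⟩ := hi
    exact Finset.mem_range.2 (getD_anti hj2 (by omega))
  calc ∑ j ∈ Finset.Ico (k+1) (pbin N), 2 ^ (n j)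
      = ∑ i ∈ (Finset.Ico (k+1) (pbin N)).image n, 2^i := (Finset.sum_image hinj).symm
    _ ≤ ∑ i ∈ Finset.range (n k), 2^i :=
        Finset.sum_le_sum_of_subset hsub
    _ = 2 ^ (n k) - 1 := sum_range_two_pow _

lemma sum_two_pow_getD (N : ℕ) :
    ∑ k ∈ Finset.range (pbin N), 2 ^ ((binExps N).getD k 0) = N := by
  have h1 := sum_range_getD ((binExps N).map (2 ^ ·)) 0
  rw [List.length_map, binExps_sum] at h1
  calc ∑ k ∈ Finset.range (pbin N), 2 ^ ((binExps N).getD k 0)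
      = ∑ k ∈ Finset.range ((binExps N).length), ((binExps N).map (2 ^ ·)).getD k 0 := by
        apply Finset.sum_congr rfl
        intro k hk
        have hk' : k < (binExps N).length := by simpa [pbin] using Finset.mem_range.1 hk
        rw [List.getD_eq_getElem ((binExps N).map (2 ^ ·)) 0 (by simpa using hk'),
          List.getD_eq_getElem _ _ hk', List.getElem_map]
    _ = N := h1

lemma pbin_pos {N : ℕ} (hN : 1 ≤ N) : 1 ≤ pbin N := by
  by_contra h
  have hp : pbin N = 0 := by omega
  have := sum_two_pow_getD N
  rw [hp] at this
  simp at this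
  omega

lemma two_pow_pbin_le {N : ℕ} (hN : 1 ≤ N) : 2 ^ pbin N ≤ N + 1 := by
  have key : 2 ^ pbin N - 1 ≤ N := by
    calc 2 ^ pbin N - 1 = ∑ k ∈ Finset.range (pbin N), 2 ^ k := (sum_range_two_pow _).symm
      _ = ∑ k ∈ Finset.range (pbin N), 2 ^ (pbin N - 1 - k) :=
          (Finset.sum_range_reflect (fun i => 2^i) _).symm
      _ ≤ ∑ k ∈ Finset.range (pbin N), 2 ^ ((binExps N).getD k 0) := by
          apply Finset.sum_le_sum
          intro k hk
          have hk' := Finset.mem_range.1 hk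
          have := sorted_length_le (binExps N) (binExps_sorted N) k (by simpa [pbin] using hk')
          exact Nat.pow_le_pow_right (by norm_num) (by simp only [pbin] at this ⊢; omega)
      _ = N := sum_two_pow_getD N
  have : 1 ≤ 2 ^ pbin N := Nat.one_le_two_pow
  omega


lemma eta_Ico_sum {N : ℕ} (k : ℕ) :
    ∑ j ∈ Finset.Ico (k+1) (pbin N), eta N j
      = ((∑ j ∈ Finset.Ico (k+1) (pbin N), 2 ^ ((binExps N).getD j 0) : ℕ) : ℝ) / N := by
  push_cast
  rw [Finset.sum_div]
  apply Finset.sum_congr rfl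
  intro j hj
  have hj' : j < pbin N := (Finset.mem_Ico.1 hj).2
  rw [eta_eq hj']

lemma eta_pos {N : ℕ} (hN : 1 ≤ N) {k : ℕ} (hk : k < pbin N) : 0 < eta N k := by
  rw [eta_eq hk]
  have : (0:ℝ) < N := by exact_mod_cast hN
  positivity

lemma part1 {N : ℕ} (hN : 1 ≤ N) :
    0 < Heta N (-1) ∧ Heta N (-1) ≤ (pbin N : ℝ) := by
  have hH : Heta N (-1) = (pbin N : ℝ) -
      ∑ k ∈ Finset.range (pbin N), eta N k ^ (-1:ℝ) * ∑ j ∈ Finset.Ico (k+1) (pbin N), eta N j := by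
    rw [Heta, Hvec]
    have h1 : ∀ k ∈ Finset.range (pbin N), eta N k ^ ((-1:ℝ)+1) = 1 := fun k _ => by
      rw [show ((-1:ℝ)+1) = 0 by norm_num, Real.rpow_zero]
    rw [Finset.sum_congr rfl h1, Finset.sum_const, Finset.card_range, nsmul_eq_mul, mul_one,
      Real.rpow_neg_one]
    ring
  have hU0 : 0 ≤ ∑ k ∈ Finset.range (pbin N), eta N k ^ (-1:ℝ) *
      ∑ j ∈ Finset.Ico (k+1) (pbin N), eta N j := by
    apply Finset.sum_nonneg
    intro k _
    exact mul_nonneg (Real.rpow_nonneg (eta_nonneg N k) _)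
      (Finset.sum_nonneg fun j _ => eta_nonneg N j)
  have hU1 : (∑ k ∈ Finset.range (pbin N), eta N k ^ (-1:ℝ) *
      ∑ j ∈ Finset.Ico (k+1) (pbin N), eta N j) < (pbin N : ℝ) := by
    have hne : (Finset.range (pbin N)).Nonempty := Finset.nonempty_range_iff.2 (by
      have := pbin_pos hN; omega)
    calc (∑ k ∈ Finset.range (pbin N), eta N k ^ (-1:ℝ) *
        ∑ j ∈ Finset.Ico (k+1) (pbin N), eta N j)
        < ∑ _k ∈ Finset.range (pbin N), (1:ℝ) := by
          apply Finset.sum_lt_sum_of_nonempty hne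
          intro k hk
          have hk' : k < pbin N := Finset.mem_range.1 hk
          have hS : ((∑ j ∈ Finset.Ico (k+1) (pbin N), 2 ^ ((binExps N).getD j 0) : ℕ) : ℝ)
              < (2:ℝ)^((binExps N).getD k 0) := by
            have h1 := Ico_sum_le hk'
            have h2 : (1:ℕ) ≤ 2^((binExps N).getD k 0) := Nat.one_le_two_pow
            have h3 : (∑ j ∈ Finset.Ico (k+1) (pbin N), 2 ^ ((binExps N).getD j 0) : ℕ)
                < 2^((binExps N).getD k 0) := by omega
            exact_mod_cast h3
          rw [eta_eq hk', eta_Ico_sum, Real.rpow_neg_one]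
          have hNpos : (0:ℝ) < N := by exact_mod_cast hN
          have h2pos : (0:ℝ) < (2:ℝ)^((binExps N).getD k 0) := by positivity
          rw [inv_div, div_mul_div_comm, div_lt_one (by positivity)]
          nlinarith [mul_lt_mul_of_pos_left hS hNpos]
      _ = (pbin N : ℝ) := by rw [Finset.sum_const, Finset.card_range, nsmul_eq_mul, mul_one]
  constructor
  · rw [hH]; linarith
  · rw [hH]; linarith

lemma part2 {s : ℝ} (hs : s < -1) {N : ℕ} (hN : 1 ≤ N) :
    |Heta N s| ≤ ((2:ℝ)^(s+1) + 3)/(1 - (2:ℝ)^(s+1)) * (N:ℝ)^(-(s+1)) := by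
  have hNpos : (0:ℝ) < N := by exact_mod_cast hN
  have ht : s + 1 < 0 := by linarith
  set r := (2:ℝ) ^ (s+1) with hr
  have hr0 : 0 < r := Real.rpow_pos_of_pos two_pos _
  have hr1 : r < 1 := Real.rpow_lt_one_of_one_lt_of_neg one_lt_two ht
  set Nt := (N:ℝ) ^ (-(s+1)) with hNtdef
  have hNt : (0:ℝ) < Nt := Real.rpow_pos_of_pos hNpos _
  set AB := (1 - r)⁻¹ * Nt with hABdef
  have hAB0 : (0:ℝ) ≤ AB := mul_nonneg (inv_nonneg.2 (by linarith)) hNt.le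
  -- θ_k^{s+1} = r^{n_k} * Nt
  have hθt : ∀ k < pbin N, eta N k ^ (s+1) = r ^ ((binExps N).getD k 0) * Nt := by
    intro k hk
    rw [eta_eq hk, Real.div_rpow (x := (2:ℝ) ^ ((binExps N).getD k 0)) (by positivity) hNpos.le,
      ← Real.rpow_natCast (2:ℝ) ((binExps N).getD k 0), ← Real.rpow_mul (by norm_num),
      mul_comm (((binExps N).getD k 0 : ℕ) : ℝ) (s+1), Real.rpow_mul (by norm_num),
      Real.rpow_natCast, hNtdef, Real.rpow_neg hNpos.le, div_eq_mul_inv]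
  -- bound on A
  have hA : ∑ k ∈ Finset.range (pbin N), eta N k ^ (s+1) ≤ AB := by
    calc ∑ k ∈ Finset.range (pbin N), eta N k ^ (s+1)
        = (∑ k ∈ Finset.range (pbin N), r ^ ((binExps N).getD k 0)) * Nt := by
          rw [Finset.sum_mul]
          exact Finset.sum_congr rfl fun k hk => hθt k (Finset.mem_range.1 hk)
      _ ≤ (∑ k ∈ Finset.range (pbin N), r ^ (pbin N - 1 - k)) * Nt := by
          apply mul_le_mul_of_nonneg_right _ hNt.le
          apply Finset.sum_le_sum
          intro k hk
          have hk' := Finset.mem_range.1 hk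
          have hlen := sorted_length_le (binExps N) (binExps_sorted N) k (by simpa [pbin] using hk')
          exact pow_le_pow_of_le_one hr0.le hr1.le (by simp only [pbin] at hlen ⊢; omega)
      _ = (∑ k ∈ Finset.range (pbin N), r ^ k) * Nt := by
          rw [Finset.sum_range_reflect (fun i => r ^ i) (pbin N)]
      _ ≤ (1 - r)⁻¹ * Nt := by
          apply mul_le_mul_of_nonneg_right _ hNt.le
          rw [← tsum_geometric_of_lt_one hr0.le hr1]
          exact (summable_geometric_of_lt_one hr0.le hr1).sum_le_tsum _ (fun i _ => pow_nonneg hr0.le i)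
  have hA0 : (0:ℝ) ≤ ∑ k ∈ Finset.range (pbin N), eta N k ^ (s+1) :=
    Finset.sum_nonneg fun k _ => Real.rpow_nonneg (eta_nonneg N k) _
  -- T_k ≤ θ_k
  have hT : ∀ k < pbin N, ∑ j ∈ Finset.Ico (k+1) (pbin N), eta N j ≤ eta N k := by
    intro k hk
    rw [eta_Ico_sum, eta_eq hk]
    apply div_le_div_of_nonneg_right ?_ hNpos.le
    have h1 := Ico_sum_le hk
    have h2 : (∑ j ∈ Finset.Ico (k+1) (pbin N), 2 ^ ((binExps N).getD j 0) : ℕ)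
        ≤ 2 ^ ((binExps N).getD k 0) := le_trans h1 (Nat.sub_le _ _)
    exact_mod_cast h2
  -- bound on B
  have hB0 : (0:ℝ) ≤ ∑ k ∈ Finset.range (pbin N),
      eta N k ^ s * ∑ j ∈ Finset.Ico (k+1) (pbin N), eta N j :=
    Finset.sum_nonneg fun k _ => mul_nonneg (Real.rpow_nonneg (eta_nonneg N k) _)
      (Finset.sum_nonneg fun j _ => eta_nonneg N j)
  have hBA : (∑ k ∈ Finset.range (pbin N),
      eta N k ^ s * ∑ j ∈ Finset.Ico (k+1) (pbin N), eta N j)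
      ≤ ∑ k ∈ Finset.range (pbin N), eta N k ^ (s+1) := by
    apply Finset.sum_le_sum
    intro k hk
    have hk' := Finset.mem_range.1 hk
    rw [Real.rpow_add_one (ne_of_gt (eta_pos hN hk'))]
    exact mul_le_mul_of_nonneg_left (hT k hk') (Real.rpow_nonneg (eta_nonneg N k) _)
  -- coefficient
  have hc : 2 * ((2:ℝ)^s - 1) = r - 2 := by
    have h2s : (2:ℝ)^s = r * 2⁻¹ := by
      rw [hr, ← Real.rpow_neg_one (2:ℝ), ← Real.rpow_add two_pos]
      norm_num
    rw [h2s]; ring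
  have hHeq : Heta N s = (∑ k ∈ Finset.range (pbin N), eta N k ^ (s+1)) +
      (r - 2) * ∑ k ∈ Finset.range (pbin N),
        eta N k ^ s * ∑ j ∈ Finset.Ico (k+1) (pbin N), eta N j := by
    rw [Heta, Hvec, hc]
  have hgoal : (r + 3)/(1 - r) * Nt = (r + 3) * AB := by
    rw [hABdef, div_eq_mul_inv]; ring
  rw [hgoal]
  set A := ∑ k ∈ Finset.range (pbin N), eta N k ^ (s+1) with hAdef
  set B := ∑ k ∈ Finset.range (pbin N),
      eta N k ^ s * ∑ j ∈ Finset.Ico (k+1) (pbin N), eta N j with hBdef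
  calc |Heta N s| = |A + (r - 2) * B| := by rw [hHeq]
    _ ≤ |A| + |(r - 2) * B| := abs_add_le _ _
    _ = A + (2 - r) * B := by
        rw [abs_of_nonneg hA0, abs_mul, abs_of_nonneg hB0,
          abs_of_nonpos (by linarith : r - 2 ≤ 0)]
        ring
    _ ≤ AB + (2 - r) * AB :=
        add_le_add hA (mul_le_mul_of_nonneg_left (le_trans hBA hA) (by linarith))
    _ ≤ (r + 3) * AB := by nlinarith [mul_nonneg hr0.le hAB0]

theorem stmt9 :
    (∀ N : ℕ, 1 ≤ N →
      0 < Heta N (-1) ∧ Heta N (-1) ≤ Real.log (N + 1) / Real.log 2 ∧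
      0 < Heta N (-1) / Real.log (N + 1) ∧
      Heta N (-1) / Real.log (N + 1) ≤ 1 / Real.log 2) ∧
    (∀ s : ℝ, s < -1 → ∀ N : ℕ, 1 ≤ N →
      |Heta N s| ≤ ((2 : ℝ) ^ (s + 1) + 3) / (1 - (2 : ℝ) ^ (s + 1)) *
        (N : ℝ) ^ (-(s + 1))) := by
  constructor
  · intro N hN
    obtain ⟨h0, hle⟩ := part1 hN
    have hlog2 : 0 < Real.log 2 := Real.log_pos one_lt_two
    have hlogN : 0 < Real.log ((N:ℝ) + 1) := Real.log_pos (by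
      have h1 : (1:ℝ) ≤ (N:ℝ) := by exact_mod_cast hN
      linarith)
    have hple : (pbin N : ℝ) ≤ Real.log ((N:ℝ) + 1) / Real.log 2 := by
      rw [le_div_iff₀ hlog2]
      have h2p : ((2:ℝ))^(pbin N) ≤ (N:ℝ) + 1 := by exact_mod_cast two_pow_pbin_le hN
      calc (pbin N : ℝ) * Real.log 2 = Real.log ((2:ℝ)^(pbin N)) := by rw [Real.log_pow]
        _ ≤ Real.log ((N:ℝ) + 1) := Real.log_le_log (by positivity) h2p
    have hH2 : Heta N (-1) ≤ Real.log ((N:ℝ) + 1) / Real.log 2 := le_trans hle hple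
    refine ⟨h0, hH2, div_pos h0 hlogN, ?_⟩
    rw [div_le_div_iff₀ hlogN hlog2]
    rw [le_div_iff₀ hlog2] at hH2
    linarith
  · intro s hs N hN
    exact part2 hs hN


end GreedyEnergy
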